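/- For the sequentially numbered path graph on n ≥ 2 vertices, the min-ID contraction procedure (repeatedly replacing each vertex by the minimum ID in its closed neighbourhood) requires exactly n − 1 iterations to contract the graph to a single vertex. -/

import Mathlib

/-- The path graph on `Fin n` with edges between consecutive vertices. -/
def pathGraph' (n : ℕ) : SimpleGraph (Fin n) where
  Adj i j := i.val + 1 = j.val ∨ j.val + 1 = i.val
  symm := by constructor; rintro i j (h | h) <;> [right; left] <;> exact h
  loopless := by constructor; rintro i (h | h) <;> omega

/-- The contracted graph: edges join distinct representatives of adjacent vertices. -/
def contractedGraph {V : Type*} (G : SimpleGraph V) (r : V → V) : SimpleGraph V where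
  Adj a b := a ≠ b ∧ ∃ v w : V, G.Adj v w ∧ r v = a ∧ r w = b
  symm := by
    constructor
    rintro a b ⟨hab, v, w, hvw, hv, hw⟩
    exact ⟨hab.symm, w, v, hvw.symm, hw, hv⟩
  loopless := by constructor; rintro a ⟨h, -⟩; exact h rfl

/-- `minRep G v` is the minimum-ID vertex in the closed neighbourhood of `v`. -/
noncomputable def minRep {n : ℕ} (G : SimpleGraph (Fin n)) (v : Fin n) : Fin n :=
  letI : DecidableRel G.Adj := Classical.decRel _
  (insert v (G.neighborFinset v)).min' (Finset.insert_nonempty _ _)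

/-- The sequence of graphs obtained by repeatedly applying min-ID contraction to the
sequentially numbered path graph on `n` vertices. -/
noncomputable def minIter (n : ℕ) : ℕ → SimpleGraph (Fin n)
  | 0 => pathGraph' n
  | i + 1 => contractedGraph (minIter n i) (minRep (minIter n i))

lemma minRep_val (n k : ℕ) (G : SimpleGraph (Fin n))
    (hG : ∀ a b : Fin n, G.Adj a b ↔
      (a.val + 1 = b.val ∨ b.val + 1 = a.val) ∧ a.val + k + 1 ≤ n ∧ b.val + k + 1 ≤ n)
    (v : Fin n) :
    (minRep G v).val = if v.val + k + 1 ≤ n then v.val - 1 else v.val := by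
  classical
  unfold minRep
  have hmem : ∀ x : Fin n, x ∈ insert v (G.neighborFinset v) ↔ x = v ∨ G.Adj v x := by
    intro x
    simp [Finset.mem_insert, SimpleGraph.mem_neighborFinset]
  split_ifs with hv
  · -- min is v - 1
    set w : Fin n := ⟨v.val - 1, by omega⟩ with hw
    have hwmem : w ∈ insert v (G.neighborFinset v) := by
      rcases Nat.eq_zero_or_pos v.val with h0 | h0
      · rw [hmem]; left; exact Fin.ext (by simp [hw, h0])
      · rw [hmem]; right; rw [hG]
        exact ⟨Or.inr (by simp [hw]; omega), by omega, by simp [hw]; omega⟩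
    have hle : ∀ x ∈ insert v (G.neighborFinset v), w ≤ x := by
      intro x hx
      rw [hmem] at hx
      rcases hx with rfl | hadj
      · exact Fin.mk_le_of_le_val (by omega)
      · rw [hG] at hadj
        rw [Fin.le_def]
        simp only [hw]
        omega
    have h1 := Finset.min'_le _ w hwmem
    have h2 := Finset.le_min' _ (Finset.insert_nonempty _ _) _ hle
    have : (insert v (G.neighborFinset v)).min' (Finset.insert_nonempty _ _) = w :=
      le_antisymm h1 h2
    rw [this]
  · -- v is isolated
    have hm := Finset.min'_mem (insert v (G.neighborFinset v)) (Finset.insert_nonempty _ _)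
    rw [hmem] at hm
    rcases hm with h | h
    · rw [h]
    · rw [hG] at h; omega

lemma minIter_adj (n : ℕ) (k : ℕ) (a b : Fin n) :
    (minIter n k).Adj a b ↔
      (a.val + 1 = b.val ∨ b.val + 1 = a.val) ∧ a.val + k + 1 ≤ n ∧ b.val + k + 1 ≤ n := by
  induction k generalizing a b with
  | zero =>
    rw [minIter]
    have ha := a.isLt
    have hb := b.isLt
    show (a.val + 1 = b.val ∨ b.val + 1 = a.val) ↔ _
    omega
  | succ k ih =>
    rw [minIter]
    have hr : ∀ v : Fin n, ((minRep (minIter n k)) v).val =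
        if v.val + k + 1 ≤ n then v.val - 1 else v.val := minRep_val n k _ ih
    constructor
    · rintro ⟨hab, v, w, hvw, hv, hw⟩
      rw [ih] at hvw
      have hv' := hr v
      have hw' := hr w
      rw [hv] at hv'
      rw [hw] at hw'
      rw [if_pos hvw.2.1] at hv'
      rw [if_pos hvw.2.2] at hw'
      have hab' : a.val ≠ b.val := fun h => hab (Fin.ext h)
      omega
    · rintro ⟨hor, ha, hb⟩
      have key : ∀ a b : Fin n, a.val + 1 = b.val → a.val + (k+1) + 1 ≤ n →
          b.val + (k+1) + 1 ≤ n →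
          (contractedGraph (minIter n k) (minRep (minIter n k))).Adj a b := by
        intro a b h ha hb
        refine ⟨fun he => by have := congrArg Fin.val he; omega,
          ⟨a.val + 1, by omega⟩, ⟨a.val + 2, by omega⟩, ?_, ?_, ?_⟩
        · rw [ih]; exact ⟨Or.inl rfl, by simp; omega, by simp; omega⟩
        · apply Fin.ext
          rw [hr]
          simp only [Fin.val_mk]
          rw [if_pos (by omega)]
          omega
        · apply Fin.ext
          rw [hr]
          simp only [Fin.val_mk]
          rw [if_pos (by omega)]
          omega
      rcases hor with h | h
      · exact key a b h ha hb
      · exact ((key b a h hb ha).symm)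

/-- The sequentially numbered path graph on `n ≥ 2` vertices needs exactly `n - 1`
min-ID contraction iterations to be contracted to a single vertex: after `n - 1`
steps no edges remain, while before that some edge is still present. -/
theorem stmt_11 (n : ℕ) (hn : 2 ≤ n) :
    (∀ a b : Fin n, ¬ (minIter n (n - 1)).Adj a b) ∧
    (∀ k < n - 1, ∃ a b : Fin n, (minIter n k).Adj a b) := by
  constructor
  · intro a b h
    rw [minIter_adj] at h
    omega
  · intro k hk
    exact ⟨⟨0, by omega⟩, ⟨1, by omega⟩,
      (minIter_adj n k _ _).mpr ⟨Or.inl rfl, by simp; omega, by simp; omega⟩⟩
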